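/- Let r > 0 and 0 < μ < 0.4, with μ < 0.4r²/(0.04 + r²), and let Z₃ = (X*, Y*) be the coexistence equilibrium with X* = 10·√(μ/(0.4−μ)) and Y* = (4r·√(0.4−μ) − 0.8·√μ)/((0.4−μ)·√μ). Then the Fréchet derivative of the Rosenzweig–MacArthur vector field F at Z₃ is represented by the matrix !![r − 0.4·√(μ/(0.4−μ)) − 5r(0.4−μ) + √(μ(0.4−μ)), −μ/0.4; 2r(0.4−μ) − 0.4·√(μ(0.4−μ)), 0]. -/

import Mathlib

/-- Holling type III functional response. -/
noncomputable def f (X : ℝ) : ℝ := X ^ 2 / (X ^ 2 + 100)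

/-- The Rosenzweig–MacArthur vector field. -/
noncomputable def F (r μ : ℝ) (p : ℝ × ℝ) : ℝ × ℝ :=
  (r * p.1 - 0.02 * p.1 ^ 2 - p.2 * f p.1, (0.4 * f p.1 - μ) * p.2)

lemma f_hasDerivAt (x : ℝ) : HasDerivAt f (200 * x / (x ^ 2 + 100) ^ 2) x := by
  have h : x ^ 2 + 100 ≠ 0 := by positivity
  have h1 : HasDerivAt (fun x : ℝ => x ^ 2) (2 * x) x := by
    simpa using hasDerivAt_pow 2 x
  have h2 : HasDerivAt (fun x : ℝ => x ^ 2 + 100) (2 * x) x := h1.add_const 100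
  have h3 := h1.div h2 h
  exact (h3 : HasDerivAt f _ x).congr_deriv (by ring)

lemma F_hasFDerivAt' (r μ : ℝ) (Z : ℝ × ℝ) :
    ∃ L : ℝ × ℝ →L[ℝ] ℝ × ℝ, HasFDerivAt (F r μ) L Z ∧ ∀ p : ℝ × ℝ,
      L p = (r * p.1 - 0.02 * (2 * Z.1) * p.1
              - (Z.2 * (200 * Z.1 / (Z.1 ^ 2 + 100) ^ 2 * p.1) + f Z.1 * p.2),
             (0.4 * f Z.1 - μ) * p.2 + Z.2 * (0.4 * (200 * Z.1 / (Z.1 ^ 2 + 100) ^ 2 * p.1))) := by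
  have hX : HasFDerivAt (fun p : ℝ × ℝ => p.1) (ContinuousLinearMap.fst ℝ ℝ ℝ) Z :=
    hasFDerivAt_fst
  have hY : HasFDerivAt (fun p : ℝ × ℝ => p.2) (ContinuousLinearMap.snd ℝ ℝ ℝ) Z :=
    hasFDerivAt_snd
  have hfc : HasFDerivAt (fun p : ℝ × ℝ => f p.1)
      ((200 * Z.1 / (Z.1 ^ 2 + 100) ^ 2) • ContinuousLinearMap.fst ℝ ℝ ℝ) Z :=
    (f_hasDerivAt Z.1).comp_hasFDerivAt Z hX
  have h1 : HasFDerivAt (fun p : ℝ × ℝ => r * p.1 - 0.02 * p.1 ^ 2 - p.2 * f p.1) _ Z :=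
    ((hX.const_mul r).sub (((by simpa [sq, Pi.mul_def] using hX.mul hX : HasFDerivAt
      (fun p : ℝ × ℝ => p.1 ^ 2)
      (Z.1 • ContinuousLinearMap.fst ℝ ℝ ℝ + Z.1 • ContinuousLinearMap.fst ℝ ℝ ℝ)
      Z)).const_mul 0.02)).sub (hY.mul hfc)
  have h2 : HasFDerivAt (fun p : ℝ × ℝ => (0.4 * f p.1 - μ) * p.2) _ Z :=
    ((hfc.const_mul 0.4).sub_const μ).mul hY
  refine ⟨_, HasFDerivAt.prodMk h1 h2, fun p => ?_⟩
  simp [ContinuousLinearMap.prod_apply, ContinuousLinearMap.smul_apply]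
  ring

theorem linearization_at_coexistence (r μ : ℝ) (hr : r > 0) (hμ0 : 0 < μ) (hμ4 : μ < 0.4)
    (hcond : μ < 0.4 * r ^ 2 / (0.04 + r ^ 2)) :
    ∃ L : ℝ × ℝ →L[ℝ] ℝ × ℝ,
      HasFDerivAt (F r μ) L
        (10 * Real.sqrt (μ / (0.4 - μ)),
          (4 * r * Real.sqrt (0.4 - μ) - 0.8 * Real.sqrt μ) / ((0.4 - μ) * Real.sqrt μ)) ∧
      ∀ p : ℝ × ℝ,
        L p = ((r - 0.4 * Real.sqrt (μ / (0.4 - μ)) - 5 * r * (0.4 - μ)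
                  + Real.sqrt (μ * (0.4 - μ))) * p.1 + (-(μ / 0.4)) * p.2,
               (2 * r * (0.4 - μ) - 0.4 * Real.sqrt (μ * (0.4 - μ))) * p.1) := by
  have hb4 : (0:ℝ) < 0.4 - μ := by linarith
  set a := Real.sqrt μ with ha_def
  set b := Real.sqrt (0.4 - μ) with hb_def
  have ha2 : a ^ 2 = μ := Real.sq_sqrt hμ0.le
  have hb2 : b ^ 2 = 0.4 - μ := Real.sq_sqrt hb4.le
  have ha0 : 0 < a := Real.sqrt_pos.mpr hμ0
  have hb0 : 0 < b := Real.sqrt_pos.mpr hb4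
  have hdiv : Real.sqrt (μ / (0.4 - μ)) = a / b := Real.sqrt_div hμ0.le _
  have hmulr : Real.sqrt (μ * (0.4 - μ)) = a * b := Real.sqrt_mul hμ0.le _
  set X : ℝ := 10 * Real.sqrt (μ / (0.4 - μ)) with hX_def
  set Y : ℝ := (4 * r * Real.sqrt (0.4 - μ) - 0.8 * Real.sqrt μ) / ((0.4 - μ) * Real.sqrt μ)
    with hY_def
  have hXab : X = 10 * (a / b) := by rw [hX_def, hdiv]
  have hden : X ^ 2 + 100 = 40 / b ^ 2 := by
    rw [hXab]
    field_simp
    linear_combination 100 * hb2 + 100 * ha2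
  have hfX : f X = μ / 0.4 := by
    unfold f
    rw [hden, hXab]
    field_simp [hμ0.ne']
    linear_combination (40:ℝ) * ha2
  have hYd : Y * (200 * X / (X ^ 2 + 100) ^ 2) = 5 * r * (0.4 - μ) - a * b := by
    rw [hY_def, hden, hXab, ← ha_def, ← hb_def, ← hb2]
    field_simp
    ring
  have hX10 : X = 10 * (a / b) := hXab
  obtain ⟨L, hL, hLp⟩ := F_hasFDerivAt' r μ (X, Y)
  refine ⟨L, hL, fun p => ?_⟩
  rw [hLp p]
  simp only
  rw [hdiv, hmulr]
  refine Prod.ext ?_ ?_ <;> simp only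
  · linear_combination (-p.1) * hYd + (-p.2) * hfX + (-0.04 * p.1) * hXab
  · linear_combination (0.4 * p.2) * hfX + (0.4 * p.1) * hYd
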